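/- Let $a, b_1, \ldots, b_\nu \in \mathbb{Q}^*_{>0}$ be strongly multiplicatively independent with invariants $m_a, m_{b_1}, \ldots, m_{b_\nu}$ (where $m_x$ is the largest integer with $x^{1/m_x} \in \mathbb{Q}$). For positive integers $i, j$, set $k = ij$ and let $\overline{W}_{i,j}$ be the image of $\langle a, b_1^j, \ldots, b_\nu^j \rangle$ in $\mathbb{Q}^*/\mathbb{Q}^{*k}$. Then $\#\overline{W}_{i,j} = \frac{ij}{(m_a, ij)} \prod_{h=1}^\nu \frac{i}{(m_{b_h}, i)}$; equivalently, defining $t_{i,j}$ by $\#\overline{W}_{i,j} \cdot t_{i,j} = i^{\nu+1} j$, one has $t_{i,j} = (ij, m_a) \prod_{h=1}^\nu (i, m_{b_h})$. -/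

import Mathlib

/-- `mRoot x` is the largest `m` such that `x` has a positive rational `m`-th root. -/
noncomputable def mRoot (x : ℚ) : ℕ :=
  sSup {m : ℕ | ∃ y : ℚ, 0 < y ∧ y ^ m = x}

lemma mRoot_bdd {x : ℚ} (hx : 0 < x) (hx1 : x ≠ 1) :
    BddAbove {m : ℕ | ∃ y : ℚ, 0 < y ∧ y ^ m = x} := by
  rcases lt_or_gt_of_ne hx1 with h | h
  · refine ⟨x.den, fun m hm => ?_⟩
    obtain ⟨y, hy0, hym⟩ := hm
    have hm0 : m ≠ 0 := by rintro rfl; simp at hym; exact hx1 hym.symm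
    have hy1 : y < 1 := by
      by_contra hy
      push_neg at hy
      exact absurd (hym ▸ one_le_pow₀ hy) (by linarith)
    have hden : 2 ≤ y.den := by
      have h1 := Rat.lt_one_iff_num_lt_denom.mpr hy1
      have h2 := Rat.num_pos.mpr hy0
      omega
    have : m < x.den := by
      calc m < 2 ^ m := Nat.lt_two_pow_self
      _ ≤ y.den ^ m := Nat.pow_le_pow_left hden m
      _ = x.den := by rw [← hym, Rat.den_pow]
    omega
  · refine ⟨x.num.toNat, fun m hm => ?_⟩
    obtain ⟨y, hy0, hym⟩ := hm
    have hm0 : m ≠ 0 := by rintro rfl; simp at hym; exact hx1 hym.symm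
    have hy1 : 1 < y := by
      by_contra hy
      push_neg at hy
      exact absurd (hym ▸ pow_le_one₀ hy0.le hy) (by linarith)
    have hnum : 2 ≤ y.num := by
      have h1 := (Rat.lt_iff _ _).mp hy1
      have hd : (1:ℤ) ≤ y.den := by exact_mod_cast Nat.one_le_iff_ne_zero.mpr y.den_nz
      simp at h1
      omega
    have h2 : (2:ℤ) ^ m ≤ x.num := by
      rw [← hym, Rat.num_pow]
      exact pow_le_pow_left₀ (by norm_num) hnum m
    have h3 : (m : ℤ) < 2 ^ m := by exact_mod_cast Nat.lt_two_pow_self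
    have : (m:ℤ) ≤ x.num := le_trans h3.le h2
    omega

lemma mRoot_mem {x : ℚ} (hx : 0 < x) (hx1 : x ≠ 1) :
    0 < mRoot x ∧ ∃ y : ℚ, 0 < y ∧ y ^ (mRoot x) = x := by
  have hne : {m : ℕ | ∃ y : ℚ, 0 < y ∧ y ^ m = x}.Nonempty := ⟨1, x, hx, pow_one x⟩
  have hmem := Nat.sSup_mem hne (mRoot_bdd hx hx1)
  refine ⟨?_, hmem⟩
  rcases Nat.eq_zero_or_pos (mRoot x) with h0 | h0
  · obtain ⟨y, hy0, hym⟩ := hmem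
    rw [show sSup {m : ℕ | ∃ y : ℚ, 0 < y ∧ y ^ m = x} = mRoot x from rfl, h0, pow_zero] at hym
    exact absurd hym.symm hx1
  · exact h0

lemma dvd_mRoot_pow {c : ℚ} (hc : 0 < c) (hc1 : c ≠ 1) {k : ℕ} (hk : 0 < k) :
    k ∣ mRoot (c ^ k) := by
  have hck : 0 < c ^ k := pow_pos hc k
  have hck1 : c ^ k ≠ 1 := by
    intro h
    rcases lt_trichotomy c 1 with hlt | heq | hgt
    · exact absurd h (by have := pow_lt_one₀ hc.le hlt hk.ne'; linarith)
    · exact hc1 heq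
    · exact absurd h (by have := one_lt_pow₀ hgt hk.ne'; linarith)
  obtain ⟨hm0, y, hy0, hym⟩ := mRoot_mem hck hck1
  set m := mRoot (c ^ k) with hm
  have hkS : k ≤ m := le_csSup (mRoot_bdd hck hck1) ⟨c, hc, rfl⟩
  set d := Nat.gcd m k with hd
  have hdk : d ∣ k := Nat.gcd_dvd_right m k
  have hd0 : 0 < d := Nat.gcd_pos_of_pos_right m hk
  set A := Int.gcdA (m:ℤ) (k:ℤ) with hA
  set B := Int.gcdB (m:ℤ) (k:ℤ) with hB
  have hbez : (d:ℤ) = (m:ℤ) * A + (k:ℤ) * B := by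
    have := Int.gcd_eq_gcd_ab (m:ℤ) (k:ℤ)
    simpa [Int.gcd_natCast_natCast] using this
  have hy' : y ≠ 0 := hy0.ne'
  have hc' : c ≠ 0 := hc.ne'
  set N : ℕ := m * (k / d) with hN
  have hym' : y ^ (m:ℤ) = c ^ (k:ℤ) := by
    rw [zpow_natCast, zpow_natCast, hym]
  have hkd : (d:ℤ) * (k/d : ℕ) = (k:ℤ) := by
    exact_mod_cast congrArg (Nat.cast : ℕ → ℤ) (Nat.mul_div_cancel' hdk)
  have key : (y ^ B * c ^ A) ^ (N:ℤ) = c ^ (k:ℤ) := by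
    rw [mul_zpow, ← zpow_mul, ← zpow_mul]
    have e1 : B * (N:ℤ) = (m:ℤ) * (B * ((k/d : ℕ):ℤ)) := by push_cast [hN]; ring
    rw [e1, zpow_mul, hym', ← zpow_mul, ← zpow_add₀ hc']
    congr 1
    have : ((k:ℤ)) * (B * ((k/d : ℕ):ℤ)) + A * (N:ℤ) = ((m:ℤ) * A + (k:ℤ) * B) * ((k/d : ℕ):ℤ) := by
      push_cast [hN]; ring
    rw [this, ← hbez]
    push_cast
    exact_mod_cast congrArg (Nat.cast : ℕ → ℤ) (Nat.mul_div_cancel' hdk)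
  have hz0 : 0 < y ^ B * c ^ A := mul_pos (zpow_pos hy0 B) (zpow_pos hc A)
  have hNS : N ≤ m := by
    apply le_csSup (mRoot_bdd hck hck1)
    refine ⟨y ^ B * c ^ A, hz0, ?_⟩
    have h := key
    rw [zpow_natCast, zpow_natCast] at h
    exact h
  have hkd1 : k / d = 1 := by
    by_contra hne
    have h2 : 2 ≤ k / d := by
      have : 0 < k / d := Nat.div_pos (Nat.le_of_dvd hk hdk) hd0
      omega
    have : 2 * m ≤ N := by rw [hN]; calc 2*m = m*2 := by ring
                                           _ ≤ m * (k/d) := Nat.mul_le_mul_left m h2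
    omega
  have : k = d := by
    have := Nat.div_mul_cancel hdk
    rw [hkd1, one_mul] at this
    omega
  rw [this]
  exact Nat.gcd_dvd_left m k

lemma form_div {G : Type*} [CommGroup G] {ν : ℕ} (a : G) (u : Fin ν → G)
    (p r : ℤ) (q s : Fin ν → ℤ) :
    (a ^ p * ∏ h, u h ^ q h) / (a ^ r * ∏ h, u h ^ s h) =
      a ^ (p - r) * ∏ h, u h ^ (q h - s h) := by
  simp only [zpow_sub, div_eq_mul_inv, mul_inv, Finset.prod_mul_distrib, Finset.prod_inv_distrib]
  ac_rfl

lemma mem_closure_form {G : Type*} [CommGroup G] {ν : ℕ} (a : G) (u : Fin ν → G) (w : G) :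
    w ∈ Subgroup.closure ({a} ∪ Set.range u) ↔
      ∃ (p : ℤ) (q : Fin ν → ℤ), w = a ^ p * ∏ h, u h ^ q h := by
  constructor
  · intro hw
    induction hw using Subgroup.closure_induction with
    | mem x hx =>
      rcases hx with hx | ⟨h, rfl⟩
      · exact ⟨1, 0, by simp [Set.eq_of_mem_singleton hx]⟩
      · refine ⟨0, Pi.single h 1, ?_⟩
        rw [Finset.prod_eq_single h (fun h' _ hne => by simp [Pi.single_eq_of_ne hne])
          (by simp)]
        simp
    | one => exact ⟨0, 0, by simp⟩
    | mul x y hx hy ihx ihy =>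
      obtain ⟨p, q, rfl⟩ := ihx
      obtain ⟨r, s, rfl⟩ := ihy
      exact ⟨p + r, q + s, by
        simp only [Pi.add_apply, zpow_add, Finset.prod_mul_distrib, mul_mul_mul_comm]⟩
    | inv x hx ihx =>
      obtain ⟨p, q, rfl⟩ := ihx
      exact ⟨-p, -q, by
        simp only [Pi.neg_apply, zpow_neg, Finset.prod_inv_distrib, mul_inv]⟩
  · rintro ⟨p, q, rfl⟩
    have hamem : a ∈ Subgroup.closure ({a} ∪ Set.range u) :=
      Subgroup.subset_closure (Or.inl rfl)
    have humem : ∀ h, u h ∈ Subgroup.closure ({a} ∪ Set.range u) :=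
      fun h => Subgroup.subset_closure (Or.inr ⟨h, rfl⟩)
    exact mul_mem (zpow_mem hamem p) (Subgroup.prod_mem _ fun h _ => zpow_mem (humem h) (q h))

lemma exp_id {K M : ℕ} (hK : 0 < K) : M * (K / Nat.gcd K M) = M / Nat.gcd K M * K := by
  set g := Nat.gcd K M with hg
  have hg0 : 0 < g := Nat.gcd_pos_of_pos_left M hK
  obtain ⟨k', hk'⟩ : g ∣ K := Nat.gcd_dvd_left K M
  obtain ⟨m', hm'⟩ : g ∣ M := Nat.gcd_dvd_right K M
  rw [hk', hm', Nat.mul_div_cancel_left _ hg0, Nat.mul_div_cancel_left _ hg0]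
  ring

lemma div_gcd_dvd_of_dvd_mul {K M : ℕ} (hK : 0 < K) {p : ℤ}
    (hdvd : (K : ℤ) ∣ (M : ℤ) * p) : ((K / Nat.gcd K M : ℕ) : ℤ) ∣ p := by
  set g := Nat.gcd K M with hg
  have hg0 : 0 < g := Nat.gcd_pos_of_pos_left M hK
  have hgK : g ∣ K := Nat.gcd_dvd_left K M
  have hgM : g ∣ M := Nat.gcd_dvd_right K M
  have h1 : ((K / g : ℕ) : ℤ) ∣ ((M / g : ℕ) : ℤ) * p := by
    have e1 : (K : ℤ) = (g : ℤ) * ((K / g : ℕ) : ℤ) := by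
      exact_mod_cast (Nat.mul_div_cancel' hgK).symm
    have e2 : (M : ℤ) = (g : ℤ) * ((M / g : ℕ) : ℤ) := by
      exact_mod_cast (Nat.mul_div_cancel' hgM).symm
    rw [e1, e2, mul_assoc] at hdvd
    exact (mul_dvd_mul_iff_left (by exact_mod_cast hg0.ne' : (g:ℤ) ≠ 0)).mp hdvd
  have hcop : Nat.Coprime (K / g) (M / g) := Nat.coprime_div_gcd_div_gcd hg0
  have hcopZ : IsCoprime ((K / g : ℕ) : ℤ) ((M / g : ℕ) : ℤ) :=
    Nat.isCoprime_iff_coprime.mpr hcop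
  exact hcopZ.dvd_of_dvd_mul_left h1

theorem stmt17 (ν : ℕ) (a : ℚˣ) (b : Fin ν → ℚˣ)
    (ha : (0 : ℚ) < a) (hb : ∀ h, (0 : ℚ) < b h)
    (hindep : ∀ (l0 : ℤ) (l : Fin ν → ℤ),
      a ^ l0 * ∏ h, b h ^ l h = 1 → l0 = 0 ∧ l = 0)
    (hstrong : ∀ (l0 : ℤ) (l : Fin ν → ℤ) (c : ℚˣ), (0 : ℚ) < c → c ≠ 1 →
      a ^ l0 * ∏ h, b h ^ l h = c →
      (mRoot (c : ℚ) : ℤ) ∣ (mRoot (a : ℚ) : ℤ) * l0 ∧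
        ∀ h, (mRoot (c : ℚ) : ℤ) ∣ (mRoot (b h : ℚ) : ℤ) * l h)
    (i j : ℕ) (hi : 0 < i) (hj : 0 < j) :
    Nat.card (Subgroup.map
        (QuotientGroup.mk' ((powMonoidHom (i * j) : ℚˣ →* ℚˣ).range))
        (Subgroup.closure ({a} ∪ Set.range fun h => b h ^ j))) *
      (Nat.gcd (i * j) (mRoot (a : ℚ)) * ∏ h, Nat.gcd i (mRoot (b h : ℚ))) =
    i ^ (ν + 1) * j := by
  classical
  have hk : 0 < i * j := Nat.mul_pos hi hj
  -- abbreviations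
  set k := i * j with hkdef
  set N := ((powMonoidHom k : ℚˣ →* ℚˣ).range) with hNdef
  have hNmem : ∀ x : ℚˣ, x ∈ N ↔ ∃ c : ℚˣ, c ^ k = x := by
    intro x
    constructor
    · rintro ⟨c, hc⟩; exact ⟨c, hc⟩
    · rintro ⟨c, hc⟩; exact ⟨c, hc⟩
  -- nontriviality
  have haU : a ≠ 1 := by
    intro h
    obtain ⟨h1, -⟩ := hindep 1 0 (by simp [h])
    exact one_ne_zero h1
  have hbU : ∀ h, b h ≠ 1 := by
    intro h hbh
    obtain ⟨-, h2⟩ := hindep 0 (Pi.single h 1) (by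
      rw [Finset.prod_eq_single h (fun h' _ hne => by simp [Pi.single_eq_of_ne hne]) (by simp)]
      simp [hbh])
    have := congrFun h2 h
    simp [Pi.single_eq_same] at this
  -- roots
  obtain ⟨hma, ya, hya0, hya⟩ := mRoot_mem ha (fun e => haU (Units.ext e))
  have hrootb : ∀ h, 0 < mRoot ((b h : ℚ)) ∧
      ∃ y : ℚ, 0 < y ∧ y ^ (mRoot ((b h : ℚ))) = (b h : ℚ) :=
    fun h => mRoot_mem (hb h) (fun e => hbU h (Units.ext e))
  choose hmb yb hyb0 hyb using hrootb
  set ma := mRoot ((a : ℚ)) with hmadef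
  set n0 := k / Nat.gcd k ma with hn0def
  set n : Fin ν → ℕ := fun h => i / Nat.gcd i (mRoot ((b h : ℚ))) with hndef
  have hg0 : 0 < Nat.gcd k ma := Nat.gcd_pos_of_pos_left ma hk
  have hg0k : Nat.gcd k ma ∣ k := Nat.gcd_dvd_left k ma
  have hn0pos : 0 < n0 := Nat.div_pos (Nat.le_of_dvd hk hg0k) hg0
  have hgg : ∀ h, 0 < Nat.gcd i (mRoot ((b h : ℚ))) :=
    fun h => Nat.gcd_pos_of_pos_left _ hi
  have hggi : ∀ h, Nat.gcd i (mRoot ((b h : ℚ))) ∣ i := fun h => Nat.gcd_dvd_left _ _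
  have hnpos : ∀ h, 0 < n h := fun h => Nat.div_pos (Nat.le_of_dvd hi (hggi h)) (hgg h)
  -- unit roots
  have hYa : (Units.mk0 ya hya0.ne') ^ ma = a := by
    apply Units.ext
    rw [Units.val_pow_eq_pow_val]
    simpa using hya
  have hYb : ∀ h, (Units.mk0 (yb h) (hyb0 h).ne') ^ (mRoot ((b h : ℚ))) = b h := by
    intro h
    apply Units.ext
    rw [Units.val_pow_eq_pow_val]
    simpa using hyb h
  -- Key2 : powers in N
  have key2a : a ^ ((n0 : ℤ)) ∈ N := by
    rw [hNmem]
    refine ⟨(Units.mk0 ya hya0.ne') ^ (ma / Nat.gcd k ma), ?_⟩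
    rw [← pow_mul, zpow_natCast, ← hYa, ← pow_mul]
    congr 1
    rw [hn0def]
    exact (exp_id hk).symm
  have key2b : ∀ h, (b h ^ j) ^ ((n h : ℤ)) ∈ N := by
    intro h
    rw [hNmem]
    set M := mRoot ((b h : ℚ)) with hM
    refine ⟨(Units.mk0 (yb h) (hyb0 h).ne') ^ (M / Nat.gcd i M), ?_⟩
    rw [zpow_natCast, ← hYb h, ← pow_mul, ← pow_mul, ← pow_mul]
    congr 1
    simp only [hndef, hkdef]
    rw [← hM]
    calc M / Nat.gcd i M * (i * j) = (M / Nat.gcd i M * i) * j := by ring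
      _ = (M * (i / Nat.gcd i M)) * j := by rw [← exp_id hi]
      _ = M * (j * (i / Nat.gcd i M)) := by ring
  -- Key1 : kernel condition
  have key1 : ∀ (p : ℤ) (q : Fin ν → ℤ), (a ^ p * ∏ h, (b h ^ j) ^ q h) ∈ N →
      ((n0 : ℤ) ∣ p ∧ ∀ h, ((n h : ℤ)) ∣ q h) := by
    intro p q hmem
    rw [hNmem] at hmem
    obtain ⟨c, hc⟩ := hmem
    have hw : a ^ p * ∏ h, b h ^ ((j : ℤ) * q h) = c ^ k := by
      rw [hc]
      congr 1
      exact Finset.prod_congr rfl fun h _ => by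
        rw [zpow_mul, zpow_natCast]
    -- positivity of value of the word
    have hwpos : (0 : ℚ) < ((a ^ p * ∏ h, b h ^ ((j : ℤ) * q h) : ℚˣ) : ℚ) := by
      rw [Units.val_mul]
      have h1 : (0:ℚ) < ((a ^ p : ℚˣ) : ℚ) := by
        rw [Units.val_zpow_eq_zpow_val]; exact zpow_pos ha p
      have h2 : (0:ℚ) < ((∏ h, b h ^ ((j : ℤ) * q h) : ℚˣ) : ℚ) := by
        rw [show ((∏ h, b h ^ ((j : ℤ) * q h) : ℚˣ) : ℚ) = ∏ h, ((b h ^ ((j : ℤ) * q h) : ℚˣ) : ℚ) from map_prod (Units.coeHom ℚ) _ _]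
        exact Finset.prod_pos fun h _ => by
          rw [Units.val_zpow_eq_zpow_val]; exact zpow_pos (hb h) _
      exact mul_pos h1 h2
    set cq : ℚ := |(c : ℚ)| with hcqdef
    have hcq0 : 0 < cq := abs_pos.mpr (Units.ne_zero c)
    have hcqk : cq ^ k = ((a ^ p * ∏ h, b h ^ ((j : ℤ) * q h) : ℚˣ) : ℚ) := by
      rw [hcqdef, ← abs_pow]
      have : ((c : ℚ)) ^ k = ((a ^ p * ∏ h, b h ^ ((j : ℤ) * q h) : ℚˣ) : ℚ) := by
        rw [← Units.val_pow_eq_pow_val, hw]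
      rw [this]
      exact abs_of_pos hwpos
    by_cases hcq1 : cq = 1
    · have hone : a ^ p * ∏ h, b h ^ ((j : ℤ) * q h) = 1 := by
        apply Units.ext
        rw [← hcqk, hcq1, one_pow, Units.val_one]
      obtain ⟨hp, hq⟩ := hindep p _ hone
      refine ⟨by simp [hp], fun h => ?_⟩
      have := congrFun hq h
      simp only [Pi.zero_apply, mul_eq_zero] at this
      rcases this with h' | h'
      · exact absurd h' (by exact_mod_cast hj.ne')
      · simp [h']
    · set C : ℚˣ := Units.mk0 cq hcq0.ne' with hCdef
      have hCval : ((C ^ k : ℚˣ) : ℚ) = cq ^ k := by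
        rw [Units.val_pow_eq_pow_val]; rfl
      have hCpos : (0:ℚ) < ((C ^ k : ℚˣ) : ℚ) := by
        rw [hCval]; exact pow_pos hcq0 k
      have hCne1 : (C ^ k : ℚˣ) ≠ 1 := by
        intro e
        have : cq ^ k = 1 := by rw [← hCval, e, Units.val_one]
        rcases lt_trichotomy cq 1 with hlt | heq | hgt
        · have := pow_lt_one₀ hcq0.le hlt hk.ne'; linarith
        · exact hcq1 heq
        · have := one_lt_pow₀ hgt hk.ne'; linarith
      have heq : a ^ p * ∏ h, b h ^ ((j : ℤ) * q h) = C ^ k := by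
        apply Units.ext
        rw [← hcqk, hCval]
      obtain ⟨h1, h2⟩ := hstrong p (fun h => (j : ℤ) * q h) (C ^ k) hCpos hCne1 heq
      rw [hCval] at h1 h2
      have hkdvd : k ∣ mRoot (cq ^ k) := dvd_mRoot_pow hcq0 hcq1 hk
      have hka : (k : ℤ) ∣ (ma : ℤ) * p :=
        dvd_trans (Int.natCast_dvd_natCast.mpr hkdvd) h1
      have hkb : ∀ h, (k : ℤ) ∣ (mRoot ((b h : ℚ)) : ℤ) * ((j : ℤ) * q h) :=
        fun h => dvd_trans (Int.natCast_dvd_natCast.mpr hkdvd) (h2 h)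
      constructor
      · exact div_gcd_dvd_of_dvd_mul hk hka
      · intro h
        have hib : (i : ℤ) ∣ (mRoot ((b h : ℚ)) : ℤ) * q h := by
          have := hkb h
          rw [hkdef] at this
          have e : (mRoot ((b h : ℚ)) : ℤ) * ((j : ℤ) * q h) =
              ((mRoot ((b h : ℚ)) : ℤ) * q h) * (j : ℤ) := by ring
          rw [e] at this
          push_cast at this ⊢
          exact (mul_dvd_mul_iff_right (by exact_mod_cast hj.ne' : (j:ℤ) ≠ 0)).mp this
        exact div_gcd_dvd_of_dvd_mul hi hib
  -- cardinality via explicit bijection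
  have hcard : Nat.card (Subgroup.map (QuotientGroup.mk' N)
      (Subgroup.closure ({a} ∪ Set.range fun h => b h ^ j))) = n0 * ∏ h, n h := by
    haveI : NeZero n0 := ⟨hn0pos.ne'⟩
    set π := QuotientGroup.mk' N with hπ
    set T := Subgroup.map π (Subgroup.closure ({a} ∪ Set.range fun h => b h ^ j)) with hT
    set F : ℤ → (Fin ν → ℤ) → ℚˣ := fun p q => a ^ p * ∏ h, (b h ^ j) ^ q h with hF
    have hFmem : ∀ p q, F p q ∈ Subgroup.closure ({a} ∪ Set.range fun h => b h ^ j) :=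
      fun p q => (mem_closure_form a (fun h => b h ^ j) _).mpr ⟨p, q, rfl⟩
    have hπeq : ∀ p q p' q', ((n0 : ℤ) ∣ p - p') → (∀ h, ((n h : ℤ)) ∣ q h - q' h) →
        π (F p q) = π (F p' q') := by
      intro p q p' q' h0 hh
      have : F p q / F p' q' ∈ N := by
        rw [hF]
        simp only
        rw [form_div]
        apply mul_mem
        · obtain ⟨t, ht⟩ := h0
          rw [ht, zpow_mul]
          exact zpow_mem key2a t
        · apply Subgroup.prod_mem
          intro h _
          obtain ⟨t, ht⟩ := hh h
          rw [ht, zpow_mul]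
          exact zpow_mem (key2b h) t
      exact QuotientGroup.eq_iff_div_mem.mpr this
    have hπker : ∀ p q p' q', π (F p q) = π (F p' q') →
        ((n0 : ℤ) ∣ p - p') ∧ ∀ h, ((n h : ℤ)) ∣ q h - q' h := by
      intro p q p' q' he
      have hd : F p q / F p' q' ∈ N := QuotientGroup.eq_iff_div_mem.mp he
      rw [hF] at hd
      simp only at hd
      rw [form_div] at hd
      exact key1 _ _ hd
    let Φ : ZMod n0 × (∀ h, ZMod (n h)) → T := fun x =>
      ⟨π (F (x.1.val : ℤ) (fun h => ((x.2 h).val : ℤ))),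
        Subgroup.mem_map.mpr ⟨_, hFmem _ _, rfl⟩⟩
    have hbij : Function.Bijective Φ := by
      constructor
      · rintro ⟨x1, x2⟩ ⟨y1, y2⟩ hxy
        have he : π (F (x1.val : ℤ) (fun h => ((x2 h).val : ℤ))) =
            π (F (y1.val : ℤ) (fun h => ((y2 h).val : ℤ))) := congrArg Subtype.val hxy
        obtain ⟨h0, hh⟩ := hπker _ _ _ _ he
        have hx1 : x1 = y1 := by
          have h1 : ((x1.val : ℤ) - y1.val) = 0 := Int.eq_zero_of_abs_lt_dvd h0 (by
            have := ZMod.val_lt x1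
            have := ZMod.val_lt y1
            rw [abs_lt]
            omega)
          exact ZMod.val_injective n0 (by omega)
        have hx2 : x2 = y2 := by
          funext h
          haveI : NeZero (n h) := ⟨(hnpos h).ne'⟩
          have h1 : (((x2 h).val : ℤ) - (y2 h).val) = 0 := Int.eq_zero_of_abs_lt_dvd (hh h) (by
            have := ZMod.val_lt (x2 h)
            have := ZMod.val_lt (y2 h)
            rw [abs_lt]
            omega)
          exact ZMod.val_injective (n h) (by omega)
        simp [hx1, hx2]
      · rintro ⟨t, ht⟩
        obtain ⟨w, hw, rfl⟩ := Subgroup.mem_map.mp ht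
        obtain ⟨p, q, rfl⟩ := (mem_closure_form a (fun h => b h ^ j) w).mp hw
        refine ⟨((p : ZMod n0), fun h => (q h : ZMod (n h))), ?_⟩
        apply Subtype.ext
        simp only [Φ]
        apply hπeq
        · rw [ZMod.val_intCast]
          exact ⟨-(p / (n0 : ℤ)), by have := Int.mul_ediv_add_emod p (n0 : ℤ); linarith⟩
        · intro h
          haveI : NeZero (n h) := ⟨(hnpos h).ne'⟩
          beta_reduce
          rw [ZMod.val_intCast]
          exact ⟨-(q h / ((n h) : ℤ)), by have := Int.mul_ediv_add_emod (q h) ((n h) : ℤ); linarith⟩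
    have hc := Nat.card_congr (Equiv.ofBijective Φ hbij)
    rw [← hc, Nat.card_prod, Nat.card_zmod, Nat.card_pi]
    congr 1
    exact Finset.prod_congr rfl fun h _ => Nat.card_zmod _
  rw [hcard]
  have h1 : n0 * Nat.gcd k ma = k := by rw [hn0def]; exact Nat.div_mul_cancel hg0k
  have h2 : ∀ h, n h * Nat.gcd i (mRoot ((b h : ℚ))) = i := fun h => by
    simp only [hndef]
    exact Nat.div_mul_cancel (hggi h)
  calc (n0 * ∏ h, n h) * (Nat.gcd k ma * ∏ h, Nat.gcd i (mRoot ((b h : ℚ))))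
      = (n0 * Nat.gcd k ma) * ((∏ h, n h) * ∏ h, Nat.gcd i (mRoot ((b h : ℚ)))) := by ring
    _ = k * ∏ h, (n h * Nat.gcd i (mRoot ((b h : ℚ)))) := by
        rw [h1, ← Finset.prod_mul_distrib]
    _ = k * ∏ _h : Fin ν, i := by rw [Finset.prod_congr rfl fun h _ => h2 h]
    _ = k * i ^ ν := by rw [Finset.prod_const, Finset.card_univ, Fintype.card_fin]
    _ = i ^ (ν + 1) * j := by rw [hkdef]; ring
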